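/- The hyperplane M of JH_∞ (functions vanishing at the root) has an octahedral norm, and being separable, M has the almost Daugavet property. -/

import Mathlib

open Metric

/-- A segment in the tree `T` of finite sequences of naturals: a finite subset totally
ordered under the prefix (extension) order. -/
def SegL (S : Finset (List ℕ)) : Prop :=
  ∀ s ∈ S, ∀ t ∈ S, s <+: t ∨ t <+: s

/-- An `n–m` segment: a nonempty segment whose least element has level (length) `n` and
whose greatest element has level `m`. -/
def IsNMSeg (S : Finset (List ℕ)) (n m : ℕ) : Prop :=
  SegL S ∧ (∀ t ∈ S, n ≤ t.length ∧ t.length ≤ m) ∧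
    (∃ t ∈ S, t.length = n) ∧ (∃ t ∈ S, t.length = m)

/-- An admissible family of segments: pairwise disjoint `n–m` segments for a common pair
`n ≤ m`. -/
def AdmissibleL (F : Finset (Finset (List ℕ))) : Prop :=
  ∃ n m : ℕ, n ≤ m ∧ (∀ S ∈ F, IsNMSeg S n m) ∧
    ∀ S ∈ F, ∀ S' ∈ F, S ≠ S' → Disjoint S S'

/-- The `JH_∞` norm of a finitely supported function on `T`. -/
noncomputable def jhInfNorm (x : (List ℕ) →₀ ℝ) : ℝ :=
  sSup {r : ℝ | ∃ F : Finset (Finset (List ℕ)), AdmissibleL F ∧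
    r = ∑ S ∈ F, |∑ t ∈ S, x t|}

def jhSet (x : (List ℕ) →₀ ℝ) : Set ℝ :=
  {r : ℝ | ∃ F : Finset (Finset (List ℕ)), AdmissibleL F ∧
    r = ∑ S ∈ F, |∑ t ∈ S, x t|}

lemma jhInfNorm_eq (x : (List ℕ) →₀ ℝ) : jhInfNorm x = sSup (jhSet x) := rfl

lemma jhSet_zero_mem (x : (List ℕ) →₀ ℝ) : (0:ℝ) ∈ jhSet x :=
  ⟨∅, ⟨0, 0, le_refl _, by simp, by simp⟩, by simp⟩

lemma jhSet_nonempty (x : (List ℕ) →₀ ℝ) : (jhSet x).Nonempty := ⟨0, jhSet_zero_mem x⟩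

lemma jhSet_le (x : (List ℕ) →₀ ℝ) {r : ℝ} (hr : r ∈ jhSet x) :
    r ≤ ∑ t ∈ x.support, |x t| := by
  obtain ⟨F, ⟨n, m, hnm, hseg, hdis⟩, rfl⟩ := hr
  calc ∑ S ∈ F, |∑ t ∈ S, x t| ≤ ∑ S ∈ F, ∑ t ∈ S ∩ x.support, |x t| := by
        refine Finset.sum_le_sum fun S hS => ?_
        have h1 : ∑ t ∈ S ∩ x.support, x t = ∑ t ∈ S, x t := by
          refine Finset.sum_subset (Finset.inter_subset_left) fun t ht ht' => ?_
          by_contra h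
          exact ht' (Finset.mem_inter.2 ⟨ht, Finsupp.mem_support_iff.2 h⟩)
        rw [← h1]
        exact Finset.abs_sum_le_sum_abs _ _
    _ = ∑ t ∈ F.biUnion (fun S => S ∩ x.support), |x t| := by
        refine (Finset.sum_biUnion ?_).symm
        intro S hS S' hS' hne
        exact Finset.disjoint_of_subset_left Finset.inter_subset_left
          (Finset.disjoint_of_subset_right Finset.inter_subset_left (hdis S hS S' hS' hne))
    _ ≤ ∑ t ∈ x.support, |x t| := by
        refine Finset.sum_le_sum_of_subset_of_nonneg ?_ (fun t _ _ => abs_nonneg _)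
        intro t ht
        obtain ⟨S, _, htS⟩ := Finset.mem_biUnion.1 ht
        exact (Finset.mem_inter.1 htS).2

lemma jhSet_bddAbove (x : (List ℕ) →₀ ℝ) : BddAbove (jhSet x) :=
  ⟨∑ t ∈ x.support, |x t|, fun _ hr => jhSet_le x hr⟩

lemma le_jhInfNorm (x : (List ℕ) →₀ ℝ) {r : ℝ} (hr : r ∈ jhSet x) : r ≤ jhInfNorm x :=
  le_csSup (jhSet_bddAbove x) hr

lemma jhInfNorm_nonneg (x : (List ℕ) →₀ ℝ) : 0 ≤ jhInfNorm x :=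
  le_jhInfNorm x (jhSet_zero_mem x)

lemma jhInfNorm_le (x : (List ℕ) →₀ ℝ) {A : ℝ} (h : ∀ r ∈ jhSet x, r ≤ A) :
    jhInfNorm x ≤ A :=
  csSup_le (jhSet_nonempty x) h

lemma admissible_singleton (t : List ℕ) : AdmissibleL {{t}} := by
  refine ⟨t.length, t.length, le_refl _, ?_, ?_⟩
  · intro S hS
    simp only [Finset.mem_singleton] at hS
    subst hS
    exact ⟨fun s hs t' ht' => by
        simp only [Finset.mem_singleton] at hs ht'; subst hs; subst ht'; left; rfl,
      fun u hu => by simp only [Finset.mem_singleton] at hu; subst hu; omega,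
      ⟨t, by simp⟩, ⟨t, by simp⟩⟩
  · intro S hS S' hS' hne
    simp only [Finset.mem_singleton] at hS hS'
    exact absurd (hS.trans hS'.symm) hne

lemma single_mem_jhSet (x : (List ℕ) →₀ ℝ) (t : List ℕ) : |x t| ∈ jhSet x :=
  ⟨{{t}}, admissible_singleton t, by simp⟩

lemma jhInfNorm_single (t : List ℕ) (c : ℝ) :
    jhInfNorm (Finsupp.single t c) = |c| := by
  refine le_antisymm (jhInfNorm_le _ ?_) ?_
  · rintro r ⟨F, ⟨n, m, hnm, hseg, hdis⟩, rfl⟩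
    have hterm : ∀ S ∈ F, |∑ u ∈ S, Finsupp.single t c u| = if t ∈ S then |c| else 0 := by
      intro S _
      have : ∑ u ∈ S, Finsupp.single t c u = if t ∈ S then c else 0 := by
        rw [Finset.sum_congr rfl (fun u _ => Finsupp.single_apply)]
        exact Finset.sum_ite_eq S t (fun _ => c)
      rw [this]
      split <;> simp
    rw [Finset.sum_congr rfl hterm, ← Finset.sum_filter]
    have hcard : (F.filter (fun S => t ∈ S)).card ≤ 1 := by
      rw [Finset.card_le_one]
      intro S hS S' hS'
      simp only [Finset.mem_filter] at hS hS'
      by_contra hne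
      exact (Finset.disjoint_left.1 (hdis S hS.1 S' hS'.1 hne) hS.2) hS'.2
    rw [Finset.sum_const, nsmul_eq_mul]
    calc ((F.filter (fun S => t ∈ S)).card : ℝ) * |c| ≤ 1 * |c| := by
          apply mul_le_mul_of_nonneg_right _ (abs_nonneg c)
          exact_mod_cast hcard
      _ = |c| := one_mul _
  · have := single_mem_jhSet (Finsupp.single t c) t
    rw [Finsupp.single_apply, if_pos rfl] at this
    exact le_jhInfNorm _ this

section MainStep

open Finset

variable (w : (List ℕ) →₀ ℝ) (K M : ℕ) (l : ℝ)

lemma entry_ne_K (hK : ∀ u ∈ w.support, ∀ c ∈ u, c < K) :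
    ∀ v, K ∈ v → v ∉ w.support := fun v hv hsup => lt_irrefl K (hK v hsup K hv)

lemma jh_main_step (hw0 : w [] = 0)
    (hK : ∀ u ∈ w.support, ∀ c ∈ u, c < K)
    (hM : ∀ u ∈ w.support, u.length ≤ M)
    (F : Finset (Finset (List ℕ))) (n m : ℕ) (hn : 1 ≤ n) (hnm : n ≤ m)
    (hseg : ∀ S ∈ F, IsNMSeg S n m)
    (hdis : ∀ S ∈ F, ∀ S' ∈ F, S ≠ S' → Disjoint S S')
    (hne : ∀ S ∈ F, ∑ u ∈ S, w u ≠ 0) (hFne : F.Nonempty) :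
    (∑ S ∈ F, |∑ u ∈ S, w u|) + |l|
      ∈ jhSet (w + Finsupp.single (K :: List.replicate M 0) l) := by
  classical
  set t0 : List ℕ := K :: List.replicate M 0 with ht0
  have ht0len : t0.length = M + 1 := by simp [ht0]
  have ht0mem : ∀ c ∈ t0, c = K ∨ c = 0 := by
    intro c hc
    rcases List.mem_cons.1 hc with h | h
    · exact Or.inl h
    · exact Or.inr (List.eq_of_mem_replicate h)
  -- every segment has a support element
  have hsupp_elem : ∀ S ∈ F, ∃ u ∈ S, u ∈ w.support := by
    intro S hS
    by_contra h
    push_neg at h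
    exact hne S hS (Finset.sum_eq_zero fun u hu => Finsupp.notMem_support_iff.1 (h u hu))
  -- segments contain no node starting with K
  have hKfree : ∀ S ∈ F, ∀ v ∈ S, ∀ rest : List ℕ, v ≠ K :: rest := by
    intro S hS v hv rest hveq
    obtain ⟨u, huS, husupp⟩ := hsupp_elem S hS
    have hu_ne : u ≠ [] := by
      intro h
      rw [Finsupp.mem_support_iff, h, hw0] at husupp
      exact husupp rfl
    obtain ⟨c, u', hcu⟩ := List.exists_cons_of_ne_nil hu_ne
    have hcK : c < K := hK u husupp c (by rw [hcu]; exact List.mem_cons_self)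
    rcases (hseg S hS).1 v hv u huS with h | h
    · rw [hveq, hcu] at h
      have := (List.cons_prefix_cons.1 h).1
      omega
    · rw [hveq, hcu] at h
      have := (List.cons_prefix_cons.1 h).1
      omega
  have hnM : n ≤ M := by
    obtain ⟨S, hS⟩ := hFne
    obtain ⟨u, huS, husupp⟩ := hsupp_elem S hS
    exact le_trans ((hseg S hS).2.1 u huS).1 (hM u husupp)
  set m' : ℕ := max m (M+1) with hm'
  have hmm' : m ≤ m' := le_max_left _ _
  have hMm' : M + 1 ≤ m' := le_max_right _ _
  -- choice of maximal elements
  have hmaxex : ∀ S ∈ F, ∃ u, u ∈ S ∧ u.length = m := by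
    intro S hS
    obtain ⟨u, hu, hul⟩ := (hseg S hS).2.2.2
    exact ⟨u, hu, hul⟩
  set g : Finset (List ℕ) → List ℕ :=
    fun S => if h : ∃ u, u ∈ S ∧ u.length = m then h.choose else [] with hg
  have hgS : ∀ S ∈ F, g S ∈ S ∧ (g S).length = m := by
    intro S hS
    have h := hmaxex S hS
    simp only [hg, dif_pos h]
    exact h.choose_spec
  have hg_pref : ∀ S ∈ F, ∀ v ∈ S, v <+: g S := by
    intro S hS v hv
    rcases (hseg S hS).1 v hv (g S) (hgS S hS).1 with h | h
    · exact h
    · have hlv : v.length ≤ m := ((hseg S hS).2.1 v hv).2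
      have : g S = v := h.eq_of_length_le (by rw [(hgS S hS).2]; exact hlv)
      rw [this]
  have hg_ne : ∀ S ∈ F, g S ≠ [] := by
    intro S hS h
    have := (hgS S hS).2
    rw [h] at this
    simp at this
    omega
  set pad : Finset (List ℕ) → Finset (List ℕ) :=
    fun S => (Finset.range (m' - m)).image (fun i => g S ++ (K+1) :: List.replicate i 0)
    with hpad
  set newS : Finset (List ℕ) → Finset (List ℕ) := fun S => S ∪ pad S with hnewS
  set T : Finset (List ℕ) := {t0.take n, t0, t0 ++ List.replicate (m' - (M+1)) 0} with hT
  have hpadlen : ∀ S ∈ F, ∀ v ∈ pad S, ∃ i, i < m' - m ∧ v.length = m + 1 + i := by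
    intro S hS v hv
    obtain ⟨i, hi, rfl⟩ := Finset.mem_image.1 hv
    refine ⟨i, Finset.mem_range.1 hi, ?_⟩
    simp [(hgS S hS).2]
    omega
  have hpadK1 : ∀ S ∈ F, ∀ v ∈ pad S, (K+1) ∈ v := by
    intro S hS v hv
    obtain ⟨i, _, rfl⟩ := Finset.mem_image.1 hv
    exact List.mem_append.2 (Or.inr List.mem_cons_self)
  have hK1t0 : (K+1) ∉ t0 := by
    intro h
    rcases ht0mem _ h with h | h <;> omega
  have hTshape : ∀ v ∈ T, ∃ r : List ℕ, v = K :: r := by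
    intro v hv
    simp only [hT, Finset.mem_insert, Finset.mem_singleton] at hv
    rcases hv with rfl | rfl | rfl
    · obtain ⟨n', rfl⟩ : ∃ n', n = n' + 1 := ⟨n - 1, by omega⟩
      exact ⟨(List.replicate M 0).take n', by simp [ht0]⟩
    · exact ⟨List.replicate M 0, rfl⟩
    · exact ⟨List.replicate M 0 ++ List.replicate (m' - (M+1)) 0, by simp [ht0]⟩
  have hTnotsupp : ∀ v ∈ T, w v = 0 := by
    intro v hv
    obtain ⟨r, rfl⟩ := hTshape v hv
    by_contra h
    exact entry_ne_K w K hK _ List.mem_cons_self (Finsupp.mem_support_iff.2 h)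
  have ht0T : t0 ∈ T := by simp [hT]
  have htake_len : (t0.take n).length = n := by
    rw [List.length_take, ht0len]
    omega
  have happ_len : (t0 ++ List.replicate (m' - (M+1)) 0).length = m' := by
    simp [ht0]
    omega
  -- sums
  have hTsum : ∑ u ∈ T, (w + Finsupp.single t0 l) u = l := by
    have h1 : ∀ u ∈ T, (w + Finsupp.single t0 l) u = Finsupp.single t0 l u := by
      intro u hu
      rw [Finsupp.add_apply, hTnotsupp u hu, zero_add]
    rw [Finset.sum_congr rfl h1, Finset.sum_congr rfl (fun u _ => Finsupp.single_apply),
      Finset.sum_ite_eq T t0 (fun _ => l), if_pos ht0T]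
  have hpadnotsupp : ∀ S ∈ F, ∀ v ∈ pad S, w v = 0 := by
    intro S hS v hv
    by_contra h
    have := hK v (Finsupp.mem_support_iff.2 h) (K+1) (hpadK1 S hS v hv)
    omega
  have ht0notpad : ∀ S ∈ F, t0 ∉ pad S := by
    intro S hS h
    exact hK1t0 (hpadK1 S hS _ h)
  have ht0notS : ∀ S ∈ F, t0 ∉ S := by
    intro S hS h
    exact hKfree S hS t0 h (List.replicate M 0) rfl
  have hdisjSpad : ∀ S ∈ F, Disjoint S (pad S) := by
    intro S hS
    rw [Finset.disjoint_left]
    intro v hvS hvpad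
    obtain ⟨i, _, hlen⟩ := hpadlen S hS v hvpad
    have := ((hseg S hS).2.1 v hvS).2
    omega
  have hnewsum : ∀ S ∈ F, ∑ u ∈ newS S, (w + Finsupp.single t0 l) u = ∑ u ∈ S, w u := by
    intro S hS
    rw [hnewS, Finset.sum_union (hdisjSpad S hS)]
    have h2 : ∑ u ∈ S, (w + Finsupp.single t0 l) u = ∑ u ∈ S, w u := by
      refine Finset.sum_congr rfl fun u hu => ?_
      rw [Finsupp.add_apply, Finsupp.single_apply, if_neg, add_zero]
      intro h
      exact ht0notS S hS (h ▸ hu)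
    have h3 : ∑ u ∈ pad S, (w + Finsupp.single t0 l) u = 0 := by
      refine Finset.sum_eq_zero fun u hu => ?_
      rw [Finsupp.add_apply, hpadnotsupp S hS u hu, Finsupp.single_apply, if_neg, add_zero]
      intro h
      exact ht0notpad S hS (h ▸ hu)
    rw [h2, h3, add_zero]
  -- injectivity of newS on F
  have hinj : ∀ A ∈ F, ∀ B ∈ F, newS A = newS B → A = B := by
    intro A hA B hB hAB
    have key : ∀ C ∈ F, ∀ D ∈ F, newS C = newS D → C ⊆ D := by
      intro C hC D hD hCD u huC
      have : u ∈ newS D := by rw [← hCD, hnewS]; exact Finset.mem_union_left _ huC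
      rcases Finset.mem_union.1 this with h | h
      · exact h
      · obtain ⟨i, _, hlen⟩ := hpadlen D hD u h
        have := ((hseg C hC).2.1 u huC).2
        omega
    exact Finset.Subset.antisymm (key A hA B hB hAB) (key B hB A hA hAB.symm)
  -- T is not an image
  have hTnotim : T ∉ F.image newS := by
    intro h
    obtain ⟨A, hA, hAT⟩ := Finset.mem_image.1 h
    have : t0 ∈ newS A := by rw [hAT]; exact ht0T
    rcases Finset.mem_union.1 this with h' | h'
    · exact ht0notS A hA h'
    · exact ht0notpad A hA h'
  refine ⟨F.image newS ∪ {T}, ⟨n, m', le_trans hnm hmm', ?_, ?_⟩, ?_⟩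
  · -- each member is an n-m' segment
    intro S'' hS''
    rcases Finset.mem_union.1 hS'' with h | h
    · obtain ⟨S, hS, rfl⟩ := Finset.mem_image.1 h
      have hSseg := hseg S hS
      refine ⟨?_, ?_, ?_, ?_⟩
      · -- SegL
        intro a ha b hb
        have hpp : ∀ u ∈ pad S, ∀ v ∈ pad S, u <+: v ∨ v <+: u := by
          intro u hu v hv
          obtain ⟨i, _, rfl⟩ := Finset.mem_image.1 hu
          obtain ⟨j, _, rfl⟩ := Finset.mem_image.1 hv
          have hrep : ∀ i j : ℕ, i ≤ j →
              (g S ++ (K+1) :: List.replicate i 0) <+: (g S ++ (K+1) :: List.replicate j 0) := by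
            intro i j hij
            refine ⟨List.replicate (j - i) 0, ?_⟩
            rw [List.append_assoc, List.cons_append, ← List.replicate_add]
            congr 3
            omega
          rcases le_total i j with hij | hij
          · exact Or.inl (hrep i j hij)
          · exact Or.inr (hrep j i hij)
        have hsp : ∀ u ∈ S, ∀ v ∈ pad S, u <+: v := by
          intro u hu v hv
          obtain ⟨i, _, rfl⟩ := Finset.mem_image.1 hv
          exact (hg_pref S hS u hu).trans (List.prefix_append _ _)
        rcases Finset.mem_union.1 ha with ha' | ha' <;> rcases Finset.mem_union.1 hb with hb' | hb'
        · exact hSseg.1 a ha' b hb'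
        · exact Or.inl (hsp a ha' b hb')
        · exact Or.inr (hsp b hb' a ha')
        · exact hpp a ha' b hb'
      · intro u hu
        rcases Finset.mem_union.1 hu with h' | h'
        · have := hSseg.2.1 u h'
          omega
        · obtain ⟨i, hi, hlen⟩ := hpadlen S hS u h'
          omega
      · obtain ⟨u, hu, hul⟩ := hSseg.2.2.1
        exact ⟨u, Finset.mem_union_left _ hu, hul⟩
      · by_cases hc : m' = m
        · refine ⟨g S, Finset.mem_union_left _ (hgS S hS).1, by rw [(hgS S hS).2, hc]⟩
        · have hlt : m < m' := lt_of_le_of_ne hmm' (fun h => hc h.symm)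
          refine ⟨g S ++ (K+1) :: List.replicate (m' - m - 1) 0, ?_, ?_⟩
          · refine Finset.mem_union_right _ (Finset.mem_image.2 ⟨m' - m - 1, ?_, rfl⟩)
            rw [Finset.mem_range]
            omega
          · simp [(hgS S hS).2]
            omega
    · rw [Finset.mem_singleton] at h
      subst h
      refine ⟨?_, ?_, ?_, ?_⟩
      · intro a ha b hb
        have h1 : t0.take n <+: t0 := List.take_prefix _ _
        have h2 : t0 <+: t0 ++ List.replicate (m' - (M+1)) 0 := List.prefix_append _ _
        simp only [hT, Finset.mem_insert, Finset.mem_singleton] at ha hb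
        rcases ha with rfl | rfl | rfl <;> rcases hb with rfl | rfl | rfl
        · exact Or.inl List.prefix_rfl
        · exact Or.inl h1
        · exact Or.inl (h1.trans h2)
        · exact Or.inr h1
        · exact Or.inl List.prefix_rfl
        · exact Or.inl h2
        · exact Or.inr (h1.trans h2)
        · exact Or.inr h2
        · exact Or.inl List.prefix_rfl
      · intro u hu
        simp only [hT, Finset.mem_insert, Finset.mem_singleton] at hu
        rcases hu with rfl | rfl | rfl
        · rw [htake_len]
          omega
        · rw [ht0len]
          omega
        · rw [happ_len]
          omega
      · exact ⟨t0.take n, by simp [hT], htake_len⟩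
      · exact ⟨t0 ++ List.replicate (m' - (M+1)) 0, by simp [hT], happ_len⟩
  · -- pairwise disjoint
    intro S₁ h₁ S₂ h₂ hne12
    have himT : ∀ A ∈ F, Disjoint (newS A) T := by
      intro A hA
      rw [Finset.disjoint_left]
      intro v hvA hvT
      obtain ⟨r, rfl⟩ := hTshape v hvT
      rcases Finset.mem_union.1 hvA with h' | h'
      · exact hKfree A hA _ h' r rfl
      · obtain ⟨i, _, heq⟩ := Finset.mem_image.1 h'
        obtain ⟨c, rest, hgc⟩ := List.exists_cons_of_ne_nil (hg_ne A hA)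
        have hcne : c ≠ K := by
          intro hcK
          exact hKfree A hA (g A) (hgS A hA).1 rest (by rw [hgc, hcK])
        rw [hgc] at heq
        simp at heq
        exact hcne heq.1
    rcases Finset.mem_union.1 h₁ with hh₁ | hh₁ <;> rcases Finset.mem_union.1 h₂ with hh₂ | hh₂
    · obtain ⟨A, hA, rfl⟩ := Finset.mem_image.1 hh₁
      obtain ⟨B, hB, rfl⟩ := Finset.mem_image.1 hh₂
      have hABne : A ≠ B := fun h => hne12 (by rw [h])
      rw [Finset.disjoint_left]
      intro v hvA hvB
      rcases Finset.mem_union.1 hvA with h' | h' <;> rcases Finset.mem_union.1 hvB with h'' | h''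
      · exact Finset.disjoint_left.1 (hdis A hA B hB hABne) h' h''
      · obtain ⟨i, _, hlen⟩ := hpadlen B hB v h''
        have := ((hseg A hA).2.1 v h').2
        omega
      · obtain ⟨i, _, hlen⟩ := hpadlen A hA v h'
        have := ((hseg B hB).2.1 v h'').2
        omega
      · obtain ⟨i, _, hieq⟩ := Finset.mem_image.1 h'
        obtain ⟨j, _, hjeq⟩ := Finset.mem_image.1 h''
        have heq : g A ++ (K+1) :: List.replicate i 0 = g B ++ (K+1) :: List.replicate j 0 := by
          rw [hieq, hjeq]
        have hglen : (g A).length = (g B).length := by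
          rw [(hgS A hA).2, (hgS B hB).2]
        have := (List.append_inj heq hglen).1
        exact Finset.disjoint_left.1 (hdis A hA B hB hABne) (hgS A hA).1
          (this ▸ (hgS B hB).1)
    · rw [Finset.mem_singleton] at hh₂
      subst hh₂
      obtain ⟨A, hA, rfl⟩ := Finset.mem_image.1 hh₁
      exact himT A hA
    · rw [Finset.mem_singleton] at hh₁
      subst hh₁
      obtain ⟨A, hA, rfl⟩ := Finset.mem_image.1 hh₂
      exact (himT A hA).symm
    · rw [Finset.mem_singleton] at hh₁ hh₂
      exact absurd (hh₁.trans hh₂.symm) hne12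
  · -- the value
    rw [Finset.sum_union (Finset.disjoint_singleton_right.2 hTnotim),
      Finset.sum_image (fun A hA B hB => hinj A hA B hB), Finset.sum_singleton, hTsum]
    congr 1
    refine (Finset.sum_congr rfl fun S hS => ?_).symm
    rw [hnewsum S hS]

end MainStep

section Wrapper

lemma abs_mem_jhSet_add_single (w : (List ℕ) →₀ ℝ) (K M : ℕ) (l : ℝ)
    (hK : ∀ u ∈ w.support, ∀ c ∈ u, c < K) :
    |l| ∈ jhSet (w + Finsupp.single (K :: List.replicate M 0) l) := by
  have h := single_mem_jhSet (w + Finsupp.single (K :: List.replicate M 0) l)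
    (K :: List.replicate M 0)
  have hw : w (K :: List.replicate M 0) = 0 := by
    by_contra h'
    exact lt_irrefl K (hK _ (Finsupp.mem_support_iff.2 h') K List.mem_cons_self)
  rwa [Finsupp.add_apply, hw, zero_add, Finsupp.single_apply, if_pos rfl] at h

lemma jh_add_single (w : (List ℕ) →₀ ℝ) (hw0 : w [] = 0) (K M : ℕ)
    (hK : ∀ u ∈ w.support, ∀ c ∈ u, c < K)
    (hM : ∀ u ∈ w.support, u.length ≤ M) (l : ℝ) :
    jhInfNorm w + |l| ≤ jhInfNorm (w + Finsupp.single (K :: List.replicate M 0) l) := by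
  classical
  set t0 : List ℕ := K :: List.replicate M 0 with ht0
  have habs : |l| ∈ jhSet (w + Finsupp.single t0 l) := abs_mem_jhSet_add_single w K M l hK
  have key : ∀ r ∈ jhSet w, r + |l| ≤ jhInfNorm (w + Finsupp.single t0 l) := by
    rintro r ⟨F, ⟨n, m, hnm, hseg, hdis⟩, rfl⟩
    set F1 := F.filter (fun S => ∑ u ∈ S, w u ≠ 0) with hF1
    have hval : ∑ S ∈ F1, |∑ u ∈ S, w u| = ∑ S ∈ F, |∑ u ∈ S, w u| := by
      refine Finset.sum_filter_of_ne fun S _ h => ?_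
      intro hc
      rw [hc] at h
      simp at h
    have hseg1 : ∀ S ∈ F1, IsNMSeg S n m := fun S hS => hseg S (Finset.filter_subset _ _ hS)
    have hdis1 : ∀ S ∈ F1, ∀ S' ∈ F1, S ≠ S' → Disjoint S S' := fun S hS S' hS' h =>
      hdis S (Finset.filter_subset _ _ hS) S' (Finset.filter_subset _ _ hS') h
    have hne1 : ∀ S ∈ F1, ∑ u ∈ S, w u ≠ 0 := fun S hS => (Finset.mem_filter.1 hS).2
    rcases Finset.eq_empty_or_nonempty F1 with hF1e | hF1ne
    · have hz : ∑ S ∈ F, |∑ u ∈ S, w u| = 0 := by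
        rw [← hval, hF1e, Finset.sum_empty]
      rw [hz, zero_add]
      exact le_jhInfNorm _ habs
    · by_cases hn0 : 1 ≤ n
      · have h := jh_main_step w K M l hw0 hK hM F1 n m hn0 hnm hseg1 hdis1 hne1 hF1ne
        have := le_jhInfNorm _ h
        rw [hval] at this
        exact this
      · -- n = 0 : all segments contain [], so there is exactly one
        have hn0' : n = 0 := by omega
        subst hn0'
        have hmemnil : ∀ S ∈ F1, ([] : List ℕ) ∈ S := by
          intro S hS
          obtain ⟨u, hu, hu0⟩ := (hseg1 S hS).2.2.1
          rw [List.length_eq_zero_iff] at hu0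
          exact hu0 ▸ hu
        obtain ⟨S0, hS0⟩ := hF1ne
        have hcard : F1 = {S0} := by
          ext S
          simp only [Finset.mem_singleton]
          constructor
          · intro hS
            by_contra hSne
            exact Finset.disjoint_left.1 (hdis1 S hS S0 hS0 hSne) (hmemnil S hS)
              (hmemnil S0 hS0)
          · intro h
            exact h ▸ hS0
        have hr : ∑ S ∈ F1, |∑ u ∈ S, w u| = |∑ u ∈ S0, w u| := by
          rw [hcard, Finset.sum_singleton]
        set S' := S0.erase [] with hS'
        have hsum' : ∑ u ∈ S', w u = ∑ u ∈ S0, w u := Finset.sum_erase _ hw0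
        have hS'ne : S'.Nonempty := by
          rcases Finset.eq_empty_or_nonempty S' with h | h
          · exfalso
            apply hne1 S0 hS0
            rw [← hsum', h, Finset.sum_empty]
          · exact h
        have hS'sub : S' ⊆ S0 := Finset.erase_subset _ _
        have hnilnot : ([] : List ℕ) ∉ S' := Finset.notMem_erase _ _
        set n' := (S'.image List.length).min' (hS'ne.image _) with hn'
        obtain ⟨un, hun, hunl⟩ : ∃ u ∈ S', u.length = n' := by
          have := Finset.min'_mem (S'.image List.length) (hS'ne.image _)
          obtain ⟨u, hu, hul⟩ := Finset.mem_image.1 this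
          exact ⟨u, hu, hul⟩
        have hn'le : ∀ u ∈ S', n' ≤ u.length := by
          intro u hu
          exact Finset.min'_le _ _ (Finset.mem_image.2 ⟨u, hu, rfl⟩)
        have hn'pos : 1 ≤ n' := by
          rcases Nat.eq_zero_or_pos n' with h | h
          · exfalso
            rw [h, List.length_eq_zero_iff] at hunl
            exact hnilnot (hunl ▸ hun)
          · exact h
        have hub : ∀ u ∈ S', u.length ≤ m := fun u hu => ((hseg1 S0 hS0).2.1 u (hS'sub hu)).2
        obtain ⟨um, hum, huml⟩ := (hseg1 S0 hS0).2.2.2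
        have humne : um ≠ [] := by
          intro h
          rw [h] at huml
          simp at huml
          have := hub un hun
          omega
        have hum' : um ∈ S' := Finset.mem_erase.2 ⟨humne, hum⟩
        have hn'm : n' ≤ m := huml ▸ hn'le um hum'
        have hseg' : IsNMSeg S' n' m := by
          refine ⟨fun a ha b hb => (hseg1 S0 hS0).1 a (hS'sub ha) b (hS'sub hb),
            fun u hu => ⟨hn'le u hu, hub u hu⟩, ⟨un, hun, hunl⟩, ⟨um, hum', huml⟩⟩
        have hne' : ∑ u ∈ S', w u ≠ 0 := by
          rw [hsum']
          exact hne1 S0 hS0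
        have h := jh_main_step w K M l hw0 hK hM {S'} n' m hn'pos hn'm
          (fun S hS => by rw [Finset.mem_singleton] at hS; exact hS ▸ hseg')
          (fun S hS S'' hS'' hne'' => by
            rw [Finset.mem_singleton] at hS hS''
            exact absurd (hS.trans hS''.symm) hne'')
          (fun S hS => by rw [Finset.mem_singleton] at hS; exact hS ▸ hne')
          ⟨S', Finset.mem_singleton_self _⟩
        rw [Finset.sum_singleton, hsum', ← hr, hval] at h
        exact le_jhInfNorm _ h
  have h1 : jhInfNorm w ≤ jhInfNorm (w + Finsupp.single t0 l) - |l| := by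
    refine jhInfNorm_le w fun r hr => ?_
    have := key r hr
    linarith
  linarith

end Wrapper

section Xside

variable {X : Type*} [NormedAddCommGroup X] [NormedSpace ℝ X]

lemma norm_tot (e : List ℕ → X)
    (hnorm : ∀ x : (List ℕ) →₀ ℝ, x [] = 0 → ‖∑ t ∈ x.support, x t • e t‖ = jhInfNorm x)
    (z : (List ℕ) →₀ ℝ) (hz : z [] = 0) :
    ‖Finsupp.linearCombination ℝ e z‖ = jhInfNorm z := by
  rw [Finsupp.linearCombination_apply, Finsupp.sum]
  exact hnorm z hz

lemma single_root_zero {t : List ℕ} (ht : t ≠ []) (c : ℝ) :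
    (Finsupp.single t c) [] = 0 := Finsupp.single_eq_of_ne' ht

lemma norm_e (e : List ℕ → X)
    (hnorm : ∀ x : (List ℕ) →₀ ℝ, x [] = 0 → ‖∑ t ∈ x.support, x t • e t‖ = jhInfNorm x)
    (t : List ℕ) (ht : t ≠ []) : ‖e t‖ = 1 := by
  have h := norm_tot e hnorm (Finsupp.single t 1) (single_root_zero ht 1)
  rw [Finsupp.linearCombination_single, one_smul, jhInfNorm_single] at h
  simpa using h

lemma add_single_norm (e : List ℕ → X)
    (hnorm : ∀ x : (List ℕ) →₀ ℝ, x [] = 0 → ‖∑ t ∈ x.support, x t • e t‖ = jhInfNorm x)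
    (z : (List ℕ) →₀ ℝ) (hz0 : z [] = 0) (K M : ℕ)
    (hK : ∀ u ∈ z.support, ∀ c ∈ u, c < K)
    (hM : ∀ u ∈ z.support, u.length ≤ M) (l : ℝ) :
    ‖Finsupp.linearCombination ℝ e z + l • e (K :: List.replicate M 0)‖
      = ‖Finsupp.linearCombination ℝ e z‖ + |l| := by
  set t0 : List ℕ := K :: List.replicate M 0 with ht0
  have ht0ne : t0 ≠ [] := by simp [ht0]
  have heq : Finsupp.linearCombination ℝ e z + l • e t0
      = Finsupp.linearCombination ℝ e (z + Finsupp.single t0 l) := by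
    rw [map_add, Finsupp.linearCombination_single]
  have hz0' : (z + Finsupp.single t0 l) [] = 0 := by
    rw [Finsupp.add_apply, hz0, single_root_zero ht0ne, add_zero]
  rw [heq, norm_tot e hnorm _ hz0', norm_tot e hnorm z hz0]
  refine le_antisymm ?_ ?_
  · have h1 : jhInfNorm (z + Finsupp.single t0 l) ≤ ∑ u ∈ (z + Finsupp.single t0 l).support, |(z + Finsupp.single t0 l) u| :=
      jhInfNorm_le _ (fun r hr => jhSet_le _ hr)
    -- use the X-norm triangle instead
    have h2 : ‖Finsupp.linearCombination ℝ e (z + Finsupp.single t0 l)‖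
        ≤ ‖Finsupp.linearCombination ℝ e z‖ + |l| := by
      rw [← heq]
      calc ‖Finsupp.linearCombination ℝ e z + l • e t0‖
          ≤ ‖Finsupp.linearCombination ℝ e z‖ + ‖l • e t0‖ := norm_add_le _ _
        _ = ‖Finsupp.linearCombination ℝ e z‖ + |l| := by
            rw [norm_smul, norm_e e hnorm t0 ht0ne, Real.norm_eq_abs, mul_one]
    rw [norm_tot e hnorm _ hz0', norm_tot e hnorm z hz0] at h2
    exact h2
  · exact jh_add_single z hz0 K M hK hM l

lemma span_elem_rep (e : List ℕ → X) (v : X)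
    (hv : v ∈ Submodule.span ℝ (e '' {t : List ℕ | t ≠ []})) :
    ∃ z : (List ℕ) →₀ ℝ, z [] = 0 ∧ Finsupp.linearCombination ℝ e z = v := by
  rw [Finsupp.mem_span_image_iff_linearCombination] at hv
  obtain ⟨z, hzsupp, hz⟩ := hv
  refine ⟨z, ?_, hz⟩
  by_contra h
  have : ([] : List ℕ) ∈ z.support := Finsupp.mem_support_iff.2 h
  exact (hzsupp this) rfl

lemma list_le_foldr_max : ∀ (u : List ℕ), ∀ c ∈ u, c ≤ u.foldr max 0 := by
  intro u
  induction u with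
  | nil => intro c hc; simp at hc
  | cons a l ih =>
    intro c hc
    simp only [List.foldr_cons]
    rcases List.mem_cons.1 hc with rfl | hc'
    · exact le_max_left _ _
    · exact le_trans (ih c hc') (le_max_right _ _)

/-- countability-based separability -/
lemma separable_of_dense_span (e : List ℕ → X)
    (hnorm : ∀ x : (List ℕ) →₀ ℝ, x [] = 0 → ‖∑ t ∈ x.support, x t • e t‖ = jhInfNorm x)
    (hdense : Dense (Submodule.span ℝ (e '' {t : List ℕ | t ≠ []}) : Set X)) :
    TopologicalSpace.SeparableSpace X := by
  classical
  set DD : Set X := Set.range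
    (fun L : List ((List ℕ) × ℚ) => (L.map (fun p => (p.2 : ℝ) • e p.1)).sum) with hDD
  refine ⟨⟨DD, Set.countable_range _, ?_⟩⟩
  rw [Metric.dense_iff]
  intro x r hr
  -- first approximate by a span element
  have hx : x ∈ closure (Submodule.span ℝ (e '' {t : List ℕ | t ≠ []}) : Set X) := by
    rw [hdense.closure_eq]; trivial
  rw [Metric.mem_closure_iff] at hx
  obtain ⟨v, hv, hvx⟩ := hx (r/2) (by linarith)
  obtain ⟨z, hz0, rfl⟩ := span_elem_rep e v hv
  have hzsupp_ne : ∀ t ∈ z.support, t ≠ [] := by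
    intro t ht h
    rw [h, Finsupp.mem_support_iff] at ht
    exact ht hz0
  set δ : ℝ := r / (2 * (z.support.card + 1)) with hδ
  have hδpos : 0 < δ := by
    apply div_pos (by linarith)
    positivity
  have hq : ∀ t : List ℕ, ∃ q : ℚ, |z t - q| < δ := fun t => exists_rat_near (z t) hδpos
  set q : List ℕ → ℚ := fun t => (hq t).choose with hqdef
  have hqs : ∀ t, |z t - q t| < δ := fun t => (hq t).choose_spec
  set L : List ((List ℕ) × ℚ) := z.support.toList.map (fun t => (t, q t)) with hL
  set d : X := (L.map (fun p => (p.2 : ℝ) • e p.1)).sum with hd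
  have hdmem : d ∈ DD := ⟨L, rfl⟩
  have hlistsum : ∀ (s : Finset (List ℕ)) (f : List ℕ → X), (s.toList.map f).sum = ∑ t ∈ s, f t := by
    intro s f
    rw [← Multiset.sum_coe, ← Multiset.map_coe, Finset.coe_toList]
    rfl
  have hdsum : d = ∑ t ∈ z.support, (q t : ℝ) • e t := by
    rw [hd, hL, List.map_map]
    simpa [Function.comp] using hlistsum z.support fun t => (q t : ℝ) • e t
  refine ⟨d, Metric.mem_ball.2 ?_, hdmem⟩
  have hvd : ‖Finsupp.linearCombination ℝ e z - d‖ ≤ (z.support.card : ℝ) * δ := by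
    rw [hdsum, Finsupp.linearCombination_apply, Finsupp.sum, ← Finset.sum_sub_distrib]
    calc ‖∑ t ∈ z.support, (z t • e t - (q t : ℝ) • e t)‖
        ≤ ∑ t ∈ z.support, ‖z t • e t - (q t : ℝ) • e t‖ := norm_sum_le _ _
      _ ≤ ∑ t ∈ z.support, δ := by
          refine Finset.sum_le_sum fun t ht => ?_
          rw [← sub_smul, norm_smul, norm_e e hnorm t (hzsupp_ne t ht), mul_one,
            Real.norm_eq_abs]
          exact le_of_lt (hqs t)
      _ = (z.support.card : ℝ) * δ := by rw [Finset.sum_const, nsmul_eq_mul]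
  have hcd : (z.support.card : ℝ) * δ < r / 2 := by
    set c : ℝ := (z.support.card : ℝ) with hc
    have hc0 : 0 ≤ c := by positivity
    have hc1 : (0:ℝ) < c + 1 := by linarith
    have hδr : δ * (2*(c+1)) = r := by
      rw [hδ, hc]
      exact div_mul_cancel₀ r (by positivity)
    nlinarith [hδpos]
  calc dist d x ≤ dist d (Finsupp.linearCombination ℝ e z) + dist (Finsupp.linearCombination ℝ e z) x := dist_triangle _ _ _
    _ < r/2 + r/2 := by
        apply add_lt_add_of_le_of_lt
        · rw [dist_eq_norm, norm_sub_rev]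
          exact le_trans hvd (le_of_lt hcd)
        · rw [dist_comm] at hvx
          rw [dist_eq_norm]
          rw [dist_eq_norm] at hvx
          exact hvx
    _ = r := by ring

end Xside

section Octa

variable {X : Type*} [NormedAddCommGroup X] [NormedSpace ℝ X]

lemma octahedral (e : List ℕ → X)
    (hnorm : ∀ x : (List ℕ) →₀ ℝ, x [] = 0 → ‖∑ t ∈ x.support, x t • e t‖ = jhInfNorm x)
    (hdense : Dense (Submodule.span ℝ (e '' {t : List ℕ | t ≠ []}) : Set X))
    (ε : ℝ) (hε : 0 < ε) (Y : Submodule ℝ X) (hY : FiniteDimensional ℝ Y) :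
    ∃ x : X, ‖x‖ = 1 ∧ ∀ y ∈ Y, ∀ l : ℝ, (1 - ε) * (|l| + ‖y‖) ≤ ‖l • x + y‖ := by
  classical
  by_cases hε1 : 1 ≤ ε
  · refine ⟨e [0], norm_e e hnorm [0] (by simp), ?_⟩
    intro y hy l
    have h1 : (1 - ε) ≤ 0 := by linarith
    have h2 : 0 ≤ |l| + ‖y‖ := by positivity
    calc (1-ε) * (|l| + ‖y‖) ≤ 0 := mul_nonpos_of_nonpos_of_nonneg h1 h2
      _ ≤ ‖l • e [0] + y‖ := norm_nonneg _
  · push_neg at hε1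
    set δ : ℝ := ε/4 with hδdef
    have hδ : 0 < δ := by rw [hδdef]; linarith
    haveI := hY
    haveI : ProperSpace Y := FiniteDimensional.proper ℝ Y
    have hcomp : IsCompact (Metric.sphere (0:Y) 1) := isCompact_sphere _ _
    obtain ⟨t, ht⟩ := hcomp.elim_finite_subcover (fun v : Y => Metric.ball v δ)
      (fun v => Metric.isOpen_ball)
      (fun u _ => Set.mem_iUnion.2 ⟨u, Metric.mem_ball_self hδ⟩)
    have happrox : ∀ v : Y, ∃ z : (List ℕ) →₀ ℝ, z [] = 0 ∧
        ‖(v:X) - Finsupp.linearCombination ℝ e z‖ < δ := by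
      intro v
      have hx : (v:X) ∈ closure (Submodule.span ℝ (e '' {t : List ℕ | t ≠ []}) : Set X) := by
        rw [hdense.closure_eq]; trivial
      rw [Metric.mem_closure_iff] at hx
      obtain ⟨a, ha, hda⟩ := hx δ hδ
      obtain ⟨z, hz0, rfl⟩ := span_elem_rep e a ha
      exact ⟨z, hz0, by rw [← dist_eq_norm]; exact hda⟩
    set zf : Y → ((List ℕ) →₀ ℝ) := fun v => (happrox v).choose with hzf
    have hzf0 : ∀ v : Y, (zf v) [] = 0 := fun v => (happrox v).choose_spec.1
    have hzfd : ∀ v : Y, ‖(v:X) - Finsupp.linearCombination ℝ e (zf v)‖ < δ :=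
      fun v => (happrox v).choose_spec.2
    set K : ℕ := 1 + t.sup (fun v => (zf v).support.sup (fun u => u.foldr max 0)) with hKdef
    set M : ℕ := t.sup (fun v => (zf v).support.sup List.length) with hMdef
    have hfresh : ∀ v ∈ t, ∀ u ∈ (zf v).support, ∀ c ∈ u, c < K := by
      intro v hv u hu c hc
      have h1 : c ≤ u.foldr max 0 := list_le_foldr_max u c hc
      have h2 : u.foldr max 0 ≤ (zf v).support.sup (fun u => u.foldr max 0) :=
        Finset.le_sup hu
      have h3 : (zf v).support.sup (fun u => u.foldr max 0)
          ≤ t.sup (fun v => (zf v).support.sup (fun u => u.foldr max 0)) :=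
        Finset.le_sup (f := fun v => (zf v).support.sup (fun u => u.foldr max 0)) hv
      omega
    have hlen : ∀ v ∈ t, ∀ u ∈ (zf v).support, u.length ≤ M := by
      intro v hv u hu
      have h2 : u.length ≤ (zf v).support.sup List.length := Finset.le_sup hu
      have h3 : (zf v).support.sup List.length ≤ M := by
        rw [hMdef]; exact Finset.le_sup (f := fun v => (zf v).support.sup List.length) hv
      omega
    set t0 : List ℕ := K :: List.replicate M 0 with ht0
    refine ⟨e t0, norm_e e hnorm t0 (by simp [ht0]), ?_⟩
    intro y hy l
    by_cases hy0 : y = 0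
    · subst hy0
      rw [add_zero, norm_smul, norm_e e hnorm t0 (by simp [ht0]), Real.norm_eq_abs,
        mul_one, norm_zero, add_zero]
      nlinarith [abs_nonneg l]
    · have hyn : 0 < ‖y‖ := norm_pos_iff.2 hy0
      set yY : Y := ⟨y, hy⟩ with hyY
      have hyYn : ‖yY‖ = ‖y‖ := rfl
      set yhat : Y := ‖y‖⁻¹ • yY with hyhat
      have hyhatn : ‖yhat‖ = 1 := by
        rw [hyhat, norm_smul, hyYn, norm_inv, Real.norm_eq_abs, abs_of_pos hyn,
          inv_mul_cancel₀ (ne_of_gt hyn)]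
      have hyhats : yhat ∈ Metric.sphere (0:Y) 1 := by
        simp [Metric.mem_sphere, dist_zero_right, hyhatn]
      obtain ⟨v, hvt, hvb⟩ : ∃ v ∈ t, yhat ∈ Metric.ball v δ := by
        have := ht hyhats
        rw [Set.mem_iUnion₂] at this
        obtain ⟨v, hv1, hv2⟩ := this
        exact ⟨v, hv1, hv2⟩
      have hd1 : ‖(yhat:X) - (v:X)‖ < δ := by
        have h := Metric.mem_ball.1 hvb
        rw [dist_eq_norm] at h
        have : ‖yhat - v‖ = ‖(yhat:X) - (v:X)‖ := by rfl
        rwa [this] at h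
      set a : X := Finsupp.linearCombination ℝ e (zf v) with ha
      have hd2 : ‖(v:X) - a‖ < δ := hzfd v
      have hyhatX : ‖(yhat:X)‖ = 1 := hyhatn
      have hna : 1 - 2*δ ≤ ‖a‖ := by
        have htri : ‖(yhat:X)‖ ≤ ‖(yhat:X) - (v:X)‖ + ‖(v:X) - a‖ + ‖a‖ := by
          have h1 : (yhat:X) = ((yhat:X) - (v:X)) + ((v:X) - a) + a := by abel
          calc ‖(yhat:X)‖ = ‖((yhat:X) - (v:X)) + ((v:X) - a) + a‖ := by rw [← h1]
            _ ≤ ‖((yhat:X) - (v:X)) + ((v:X) - a)‖ + ‖a‖ := norm_add_le _ _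
            _ ≤ ‖(yhat:X) - (v:X)‖ + ‖(v:X) - a‖ + ‖a‖ := by
                have := norm_add_le ((yhat:X) - (v:X)) ((v:X) - a)
                linarith
        rw [hyhatX] at htri
        linarith
      set l' : ℝ := l / ‖y‖ with hl'
      have hkey : ‖l' • e t0 + a‖ = ‖a‖ + |l'| := by
        have h := add_single_norm e hnorm (zf v) (hzf0 v) K M
          (fun u hu c hc => hfresh v hvt u hu c hc) (fun u hu => hlen v hvt u hu) l'
        rw [← ha] at h
        rw [add_comm]
        exact h
      have hstep : |l'| + 1 - 4*δ ≤ ‖l' • e t0 + (yhat:X)‖ := by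
        have htri2 : ‖l' • e t0 + a‖ ≤ ‖l' • e t0 + (yhat:X)‖ + ‖(yhat:X) - a‖ := by
          have h1 : l' • e t0 + a = (l' • e t0 + (yhat:X)) - ((yhat:X) - a) := by abel
          rw [h1]
          exact norm_sub_le _ _
        have htri3 : ‖(yhat:X) - a‖ ≤ ‖(yhat:X) - (v:X)‖ + ‖(v:X) - a‖ := by
          have h1 : (yhat:X) - a = ((yhat:X) - (v:X)) + ((v:X) - a) := by abel
          rw [h1]
          exact norm_add_le _ _
        rw [hkey] at htri2
        linarith
      have hcoe : ((yhat : Y) : X) = ‖y‖⁻¹ • y := by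
        rw [hyhat, hyY]
        rfl
      have hfinal : ‖l • e t0 + y‖ = ‖y‖ * ‖l' • e t0 + (yhat:X)‖ := by
        have h1 : ‖y‖ • (l' • e t0 + (yhat:X)) = l • e t0 + y := by
          rw [smul_add, hcoe, smul_smul, smul_smul, mul_inv_cancel₀ (ne_of_gt hyn), one_smul,
            hl', mul_div_cancel₀]
          exact ne_of_gt hyn
        rw [← h1, norm_smul, Real.norm_eq_abs, abs_of_pos hyn]
      rw [hfinal]
      have habsl : |l'| = |l| / ‖y‖ := by
        rw [hl', abs_div, abs_of_pos hyn]
      have hexp : (1-ε)*(|l| + ‖y‖) = ‖y‖ * ((1-ε)*(|l'| + 1)) := by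
        rw [habsl]
        field_simp
      rw [hexp]
      have hmid : (1-ε)*(|l'| + 1) ≤ |l'| + 1 - 4*δ := by
        rw [hδdef]
        nlinarith [abs_nonneg l']
      calc ‖y‖ * ((1-ε)*(|l'| + 1)) ≤ ‖y‖ * (|l'| + 1 - 4*δ) :=
            mul_le_mul_of_nonneg_left hmid (le_of_lt hyn)
        _ ≤ ‖y‖ * ‖l' • e t0 + (yhat:X)‖ :=
            mul_le_mul_of_nonneg_left hstep (le_of_lt hyn)

end Octa

section Cluster

variable {X : Type*} [NormedAddCommGroup X] [NormedSpace ℝ X]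

lemma exists_cluster_functional (f : ℕ → X →L[ℝ] ℝ) (hf : ∀ n, ‖f n‖ ≤ 1) :
    ∃ g : X →L[ℝ] ℝ, ‖g‖ ≤ 1 ∧
      ∀ (x : X) (L : ℝ), (∀ᶠ n in Filter.atTop, f n x = L) → g x = L := by
  classical
  set U : Ultrafilter ℕ := Ultrafilter.of Filter.atTop with hU
  have hUle : (U : Filter ℕ) ≤ Filter.atTop := Ultrafilter.of_le _
  have hbound : ∀ (x : X) (n : ℕ), f n x ∈ Set.Icc (-‖x‖) ‖x‖ := by
    intro x n
    have h1 : |f n x| ≤ ‖x‖ := by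
      rw [← Real.norm_eq_abs]
      calc ‖f n x‖ ≤ ‖f n‖ * ‖x‖ := (f n).le_opNorm x
        _ ≤ 1 * ‖x‖ := mul_le_mul_of_nonneg_right (hf n) (norm_nonneg x)
        _ = ‖x‖ := one_mul _
    exact ⟨by linarith [(abs_le.1 h1).1], (abs_le.1 h1).2⟩
  have hlim : ∀ x : X, ∃ L, L ∈ Set.Icc (-‖x‖) ‖x‖ ∧
      Filter.Tendsto (fun n => f n x) (U : Filter ℕ) (nhds L) := by
    intro x
    have hc : IsCompact (Set.Icc (-‖x‖) ‖x‖) := isCompact_Icc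
    have hmem : (Ultrafilter.map (fun n => f n x) U : Filter ℝ) ≤
        Filter.principal (Set.Icc (-‖x‖) ‖x‖) := by
      rw [Ultrafilter.coe_map]
      rw [Filter.le_principal_iff]
      exact Filter.mem_map.2 (Filter.univ_mem' (fun n => hbound x n))
    obtain ⟨L, hL, hle⟩ := hc.ultrafilter_le_nhds (Ultrafilter.map (fun n => f n x) U) hmem
    refine ⟨L, hL, ?_⟩
    rw [Filter.Tendsto]
    rw [Ultrafilter.coe_map] at hle
    exact hle
  set gf : X → ℝ := fun x => (hlim x).choose with hgfdef
  have hgf : ∀ x : X, Filter.Tendsto (fun n => f n x) (U : Filter ℕ) (nhds (gf x)) :=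
    fun x => (hlim x).choose_spec.2
  have hgfb : ∀ x : X, |gf x| ≤ ‖x‖ := by
    intro x
    have h := (hlim x).choose_spec.1
    rw [abs_le]
    exact ⟨h.1, h.2⟩
  have hadd : ∀ x y : X, gf (x + y) = gf x + gf y := by
    intro x y
    have h1 : Filter.Tendsto (fun n => f n (x + y)) (U : Filter ℕ) (nhds (gf x + gf y)) := by
      have := (hgf x).add (hgf y)
      simpa [map_add] using this
    exact tendsto_nhds_unique (hgf (x + y)) h1
  have hsmul : ∀ (c : ℝ) (x : X), gf (c • x) = c * gf x := by
    intro c x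
    have h1 : Filter.Tendsto (fun n => f n (c • x)) (U : Filter ℕ) (nhds (c * gf x)) := by
      have := (hgf x).const_mul c
      simpa [map_smul, smul_eq_mul] using this
    exact tendsto_nhds_unique (hgf (c • x)) h1
  set glin : X →ₗ[ℝ] ℝ :=
    { toFun := gf, map_add' := hadd, map_smul' := by intro c x; simp [hsmul c x] } with hglin
  set g : X →L[ℝ] ℝ := glin.mkContinuous 1
    (fun x => by rw [Real.norm_eq_abs, one_mul]; exact hgfb x) with hgdef
  have hgnorm : ‖g‖ ≤ 1 :=
    glin.mkContinuous_norm_le zero_le_one _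
  refine ⟨g, hgnorm, ?_⟩
  intro x L hev
  have hevU : ∀ᶠ n in (U : Filter ℕ), f n x = L := hUle hev
  have h1 : Filter.Tendsto (fun n => f n x) (U : Filter ℕ) (nhds L) := by
    refine Filter.Tendsto.congr' ?_ tendsto_const_nhds
    filter_upwards [hevU] with n hn
    exact hn.symm
  have : gf x = L := tendsto_nhds_unique (hgf x) h1
  exact this

end Cluster

section Bits

lemma finset_testBit (s : Finset ℕ) : ∃ a : ℕ, ∀ j : ℕ, a.testBit j = true ↔ j ∈ s := by
  classical
  induction s using Finset.induction with
  | empty => exact ⟨0, fun j => by simp [Nat.zero_testBit]⟩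
  | @insert i s' hns ih =>
    obtain ⟨a, ha⟩ := ih
    refine ⟨a ||| 2^i, fun j => ?_⟩
    rw [Nat.testBit_lor, Finset.mem_insert]
    by_cases hij : i = j
    · subst hij
      simp [Nat.testBit_two_pow_self]
    · rw [Nat.testBit_two_pow_of_ne hij]
      simp [ha j, eq_comm, hij, fun h : j = i => hij h.symm]

end Bits

section Setup

variable {X : Type*} [NormedAddCommGroup X] [NormedSpace ℝ X] [CompleteSpace X]

lemma daugavet_setup (e : List ℕ → X)
    (hnorm : ∀ x : (List ℕ) →₀ ℝ, x [] = 0 → ‖∑ t ∈ x.support, x t • e t‖ = jhInfNorm x)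
    (hdense : Dense (Submodule.span ℝ (e '' {t : List ℕ | t ≠ []}) : Set X)) :
    ∃ (u y : ℕ → X) (W : ℕ → Submodule ℝ X) (g : ℕ → X →L[ℝ] ℝ),
      (∀ (x : X) (ε : ℝ), 0 < ε → ∃ n, ‖x - u n‖ < ε) ∧
      (∀ m, ‖y m‖ = 1) ∧
      (∀ m, ∀ v ∈ W m, ∀ l : ℝ, ‖v + l • y m‖ = ‖v‖ + |l|) ∧
      (∀ i m, i ≤ m → u i ∈ W m) ∧
      (∀ j, ‖g j‖ ≤ 1) ∧
      (∀ j, g j (u j) = ‖u j‖) ∧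
      (∀ j m, j < m →
        g j (y m) = (if Nat.testBit (Nat.unpair m).1 j then (1:ℝ) else -1)) := by
  classical
  haveI hsep : TopologicalSpace.SeparableSpace X := separable_of_dense_span e hnorm hdense
  -- a dense sequence of finitely supported vectors
  obtain ⟨C, hCc, hCd⟩ := TopologicalSpace.exists_countable_dense X
  have hCne : C.Nonempty := hCd.nonempty
  obtain ⟨φ, hφ⟩ := Set.Countable.exists_eq_range hCc hCne
  have happ : ∀ (p : ℕ × ℕ), ∃ zz : (List ℕ) →₀ ℝ, zz [] = 0 ∧
      ‖φ p.1 - Finsupp.linearCombination ℝ e zz‖ < 1/(p.2+1) := by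
    intro p
    have hx : (φ p.1) ∈ closure (Submodule.span ℝ (e '' {t : List ℕ | t ≠ []}) : Set X) := by
      rw [hdense.closure_eq]; trivial
    rw [Metric.mem_closure_iff] at hx
    obtain ⟨a, ha, hda⟩ := hx (1/(p.2+1)) (by positivity)
    obtain ⟨zz, hz0, rfl⟩ := span_elem_rep e a ha
    exact ⟨zz, hz0, by rw [← dist_eq_norm]; exact hda⟩
  set z : ℕ → ((List ℕ) →₀ ℝ) := fun n => (happ (Nat.unpair n)).choose with hzdef
  have hz0 : ∀ n, (z n) [] = 0 := fun n => (happ (Nat.unpair n)).choose_spec.1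
  have hzd : ∀ n, ‖φ (Nat.unpair n).1 - Finsupp.linearCombination ℝ e (z n)‖
      < 1/((Nat.unpair n).2+1) := fun n => (happ (Nat.unpair n)).choose_spec.2
  set u : ℕ → X := fun n => Finsupp.linearCombination ℝ e (z n) with hudef
  have hu : ∀ (x : X) (ε : ℝ), 0 < ε → ∃ n, ‖x - u n‖ < ε := by
    intro x ε hε
    have hx : x ∈ closure C := by rw [hCd.closure_eq]; trivial
    rw [Metric.mem_closure_iff] at hx
    obtain ⟨c, hc, hdc⟩ := hx (ε/2) (by linarith)
    rw [hφ] at hc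
    obtain ⟨i, rfl⟩ := hc
    obtain ⟨k, hk⟩ := exists_nat_one_div_lt (show (0:ℝ) < ε/2 by linarith)
    refine ⟨Nat.pair i k, ?_⟩
    have h1 := hzd (Nat.pair i k)
    rw [Nat.unpair_pair] at h1
    have h2 : ‖x - u (Nat.pair i k)‖ ≤ ‖x - φ i‖ + ‖φ i - u (Nat.pair i k)‖ := by
      have : x - u (Nat.pair i k) = (x - φ i) + (φ i - u (Nat.pair i k)) := by abel
      rw [this]; exact norm_add_le _ _
    have h3 : ‖x - φ i‖ < ε/2 := by rw [← dist_eq_norm]; exact hdc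
    have h4 : ‖φ i - u (Nat.pair i k)‖ < ε/2 := by
      calc ‖φ i - u (Nat.pair i k)‖ < 1/(k+1) := by exact_mod_cast h1
        _ < ε/2 := by exact_mod_cast hk
    linarith
  -- the fresh-node recursion
  set mkT : Finset (List ℕ) → List ℕ :=
    fun A => (1 + A.sup (fun u => u.foldr max 0)) :: List.replicate (A.sup List.length) 0
    with hmkT
  obtain ⟨G, hG0, hGsucc⟩ : ∃ G : ℕ → Finset (List ℕ), G 0 = (z 0).support ∧
      ∀ m, G (m+1) = (G m ∪ (z (m+1)).support) ∪ {mkT (G m)} :=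
    ⟨fun n => Nat.rec ((z 0).support)
      (fun m Gm => (Gm ∪ (z (m+1)).support) ∪ {mkT Gm}) n, rfl, fun m => rfl⟩
  set tt : ℕ → List ℕ := fun m => mkT (G m) with htt
  set y : ℕ → X := fun m => e (tt m) with hy
  have httne : ∀ m, tt m ≠ [] := fun m => by simp [htt, hmkT]
  have hmono : ∀ m m', m ≤ m' → G m ⊆ G m' := by
    intro m m' hmm'
    induction m' with
    | zero => have : m = 0 := by omega
              rw [this]
    | succ k ih =>
      rcases Nat.lt_or_ge m (k+1) with h | h
      · have h2 := ih (by omega)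
        rw [hGsucc k]
        intro a ha
        exact Finset.mem_union_left _ (Finset.mem_union_left _ (h2 ha))
      · have : m = k+1 := by omega
        rw [this]
  have hzG : ∀ i m, i ≤ m → (z i).support ⊆ G m := by
    intro i m him
    have h1 : (z i).support ⊆ G i := by
      cases i with
      | zero => rw [hG0]
      | succ k =>
        rw [hGsucc k]
        intro a ha
        exact Finset.mem_union_left _ (Finset.mem_union_right _ ha)
    exact h1.trans (hmono i m him)
  have htG : ∀ i m, i < m → tt i ∈ G m := by
    intro i m him
    have h1 : tt i ∈ G (i+1) := by
      rw [hGsucc i]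
      exact Finset.mem_union_right _ (Finset.mem_singleton_self _)
    exact hmono (i+1) m (by omega) h1
  -- the submodules
  set W : ℕ → Submodule ℝ X := fun m =>
    Submodule.map (Finsupp.linearCombination ℝ e)
      (Finsupp.supported ℝ ℝ ((↑(G m) : Set (List ℕ)) \ {[]})) with hW
  have hyn : ∀ m, ‖y m‖ = 1 := fun m => norm_e e hnorm (tt m) (httne m)
  have hpeel : ∀ m, ∀ v ∈ W m, ∀ l : ℝ, ‖v + l • y m‖ = ‖v‖ + |l| := by
    intro m v hv l
    obtain ⟨w, hw, rfl⟩ := hv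
    have hw' := (Finsupp.mem_supported ℝ w).1 hw
    have hw1 : ∀ a ∈ w.support, a ∈ G m := by
      intro a ha
      exact ((Set.mem_diff _).1 (hw' ha)).1
    have hw2 : w [] = 0 := by
      by_contra h
      have h1 : ([] : List ℕ) ∈ w.support := Finsupp.mem_support_iff.2 h
      exact ((Set.mem_diff _).1 (hw' h1)).2 rfl
    have := add_single_norm e hnorm w hw2
      (1 + (G m).sup (fun u => u.foldr max 0)) ((G m).sup List.length)
      (fun a ha c hc => by
        have h1 : c ≤ a.foldr max 0 := list_le_foldr_max a c hc
        have h2 : a.foldr max 0 ≤ (G m).sup (fun u => u.foldr max 0) :=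
          Finset.le_sup (hw1 a ha)
        omega)
      (fun a ha => Finset.le_sup (f := List.length) (hw1 a ha)) l
    exact this
  have huW : ∀ i m, i ≤ m → u i ∈ W m := by
    intro i m him
    refine ⟨z i, (Finsupp.mem_supported ℝ (z i)).2 ?_, rfl⟩
    intro a ha
    refine (Set.mem_diff _).2 ⟨hzG i m him ha, ?_⟩
    intro h
    rw [Set.mem_singleton_iff] at h
    subst h
    exact (Finsupp.mem_support_iff.1 ha) (hz0 i)
  have hyW : ∀ i m, i < m → y i ∈ W m := by
    intro i m him
    refine ⟨Finsupp.single (tt i) 1, (Finsupp.mem_supported ℝ _).2 ?_, ?_⟩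
    · intro a ha
      have : a = tt i := by
        have := Finsupp.support_single_subset ha
        simpa using this
      subst this
      exact (Set.mem_diff _).2 ⟨htG i m him, fun h => httne i (Set.mem_singleton_iff.1 h)⟩
    · rw [Finsupp.linearCombination_single, one_smul]
  -- exact ℓ¹ sums
  have hL1 : ∀ (A : Finset ℕ) (v : X) (a : ℕ → ℝ), (∀ m ∈ A, v ∈ W m) →
      ‖v + ∑ m ∈ A, a m • y m‖ = ‖v‖ + ∑ m ∈ A, |a m| := by
    intro A
    induction A using Finset.induction_on_max with
    | empty => intro v a _; simp
    | insert b A hlt ih =>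
      intro v a hv
      have hbA : b ∉ A := fun h => lt_irrefl b (hlt b h)
      rw [Finset.sum_insert hbA, Finset.sum_insert hbA]
      have h1 : v + (a b • y b + ∑ m ∈ A, a m • y m)
          = (v + ∑ m ∈ A, a m • y m) + a b • y b := by abel
      rw [h1]
      have h2 : (v + ∑ m ∈ A, a m • y m) ∈ W b := by
        refine Submodule.add_mem _ (hv b (Finset.mem_insert_self _ _)) ?_
        exact Submodule.sum_mem _ (fun m hm => Submodule.smul_mem _ _ (hyW m b (hlt m hm)))
      rw [hpeel b _ h2 (a b), ih v a (fun m hm => hv m (Finset.mem_insert_of_mem hm))]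
      ring
  -- normalized u's
  set w' : ℕ → X := fun j => if h : u j = 0 then 0 else ‖u j‖⁻¹ • u j with hw'def
  have hw'W : ∀ j m, j ≤ m → w' j ∈ W m := by
    intro j m hjm
    simp only [hw'def]
    by_cases h : u j = 0
    · rw [dif_pos h]; exact Submodule.zero_mem _
    · rw [dif_neg h]; exact Submodule.smul_mem _ _ (huW j m hjm)
  have hw'smul : ∀ j, ‖u j‖ • w' j = u j := by
    intro j
    simp only [hw'def]
    by_cases h : u j = 0
    · rw [dif_pos h, smul_zero, h]
    · rw [dif_neg h, smul_smul, mul_inv_cancel₀ (norm_ne_zero_iff.2 h), one_smul]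
  have hw'mul : ∀ j, ‖u j‖ * ‖w' j‖ = ‖u j‖ := by
    intro j
    simp only [hw'def]
    by_cases h : u j = 0
    · rw [dif_pos h, h]; simp
    · rw [dif_neg h, norm_smul, norm_inv, norm_norm,
        inv_mul_cancel₀ (norm_ne_zero_iff.2 h), mul_one]
  -- the sign pattern
  set σ : ℕ → ℕ → ℝ :=
    fun j m => if Nat.testBit (Nat.unpair m).1 j then (1:ℝ) else -1 with hσ
  have hσ1 : ∀ j m, |σ j m| = 1 := by
    intro j m
    simp only [hσ]
    split <;> simp
  -- the norming vectors
  set Wvec : ℕ → ℕ → X :=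
    fun j n => (n:ℝ) • w' j + ∑ m ∈ Finset.Ioc j n, σ j m • y m with hWvec
  have hWnorm : ∀ j n, ‖Wvec j n‖ = (n:ℝ) * ‖w' j‖ + ((Finset.Ioc j n).card : ℝ) := by
    intro j n
    rw [hWvec]
    have := hL1 (Finset.Ioc j n) ((n:ℝ) • w' j) (σ j)
      (fun m hm => Submodule.smul_mem _ _ (hw'W j m (le_of_lt (Finset.mem_Ioc.1 hm).1)))
    rw [this, norm_smul, Real.norm_natCast]
    congr 1
    rw [Finset.sum_congr rfl (fun m _ => hσ1 j m), Finset.sum_const, nsmul_eq_mul, mul_one]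
  have hWpos : ∀ j n, j < n → Wvec j n ≠ 0 := by
    intro j n hjn h0
    have h1 := hWnorm j n
    rw [h0, norm_zero] at h1
    have h2 : (Finset.Ioc j n).card = n - j := Nat.card_Ioc j n
    have h3 : 1 ≤ n - j := by omega
    have h4 : (0:ℝ) ≤ (n:ℝ) * ‖w' j‖ := by positivity
    have h5 : (1:ℝ) ≤ ((Finset.Ioc j n).card : ℝ) := by
      rw [h2]; exact_mod_cast h3
    linarith
  -- dual functionals
  set f : ℕ → ℕ → (X →L[ℝ] ℝ) := fun j n =>
    if h : j < n then (exists_dual_vector ℝ (Wvec j n) (norm_ne_zero_iff.2 (hWpos j n h))).choose else 0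
    with hf
  have hfn : ∀ j n, j < n → ‖f j n‖ = 1 ∧ f j n (Wvec j n) = ‖Wvec j n‖ := by
    intro j n h
    rw [hf]
    simp only [dif_pos h]
    exact ⟨(exists_dual_vector ℝ (Wvec j n) (norm_ne_zero_iff.2 (hWpos j n h))).choose_spec.1,
      (exists_dual_vector ℝ (Wvec j n) (norm_ne_zero_iff.2 (hWpos j n h))).choose_spec.2⟩
  have hfb : ∀ j n, ‖f j n‖ ≤ 1 := by
    intro j n
    rw [hf]
    by_cases h : j < n
    · simp only [dif_pos h]
      exact le_of_eq (exists_dual_vector ℝ (Wvec j n) (norm_ne_zero_iff.2 (hWpos j n h))).choose_spec.1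
    · simp only [dif_neg h, norm_zero]
      exact zero_le_one
  have hdef : ∀ j n, j < n →
      f j n (w' j) = ‖w' j‖ ∧ ∀ m ∈ Finset.Ioc j n, f j n (y m) = σ j m := by
    intro j n hjn
    obtain ⟨hF1, hFW⟩ := hfn j n hjn
    set F := f j n
    have hexp : F (Wvec j n) = (n:ℝ) * F (w' j) + ∑ m ∈ Finset.Ioc j n, σ j m * F (y m) := by
      rw [hWvec]
      rw [map_add, map_smul, map_sum, smul_eq_mul]
      congr 1
      exact Finset.sum_congr rfl (fun m _ => by rw [map_smul, smul_eq_mul])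
    have hbF : ∀ (x : X), F x ≤ ‖x‖ := by
      intro x
      calc F x ≤ |F x| := le_abs_self _
        _ = ‖F x‖ := (Real.norm_eq_abs _).symm
        _ ≤ ‖F‖ * ‖x‖ := F.le_opNorm x
        _ = ‖x‖ := by rw [hF1, one_mul]
    have hbw : F (w' j) ≤ ‖w' j‖ := hbF _
    have hbm : ∀ m ∈ Finset.Ioc j n, σ j m * F (y m) ≤ 1 := by
      intro m hm
      calc σ j m * F (y m) ≤ |σ j m * F (y m)| := le_abs_self _
        _ = |σ j m| * |F (y m)| := abs_mul _ _
        _ = |F (y m)| := by rw [hσ1, one_mul]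
        _ = ‖F (y m)‖ := (Real.norm_eq_abs _).symm
        _ ≤ ‖F‖ * ‖y m‖ := F.le_opNorm _
        _ = 1 := by rw [hF1, hyn, one_mul]
    have hsum0 : (n:ℝ) * (‖w' j‖ - F (w' j))
        + ∑ m ∈ Finset.Ioc j n, (1 - σ j m * F (y m)) = 0 := by
      have h1 : F (Wvec j n) = ‖Wvec j n‖ := hFW
      rw [hexp, hWnorm] at h1
      rw [Finset.sum_sub_distrib, Finset.sum_const, nsmul_eq_mul, mul_one]
      linarith
    have hterm1 : (0:ℝ) ≤ (n:ℝ) * (‖w' j‖ - F (w' j)) := by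
      have : (0:ℝ) ≤ (n:ℝ) := by positivity
      have h2 : 0 ≤ ‖w' j‖ - F (w' j) := by linarith [hbw]
      positivity
    have hterm2 : (0:ℝ) ≤ ∑ m ∈ Finset.Ioc j n, (1 - σ j m * F (y m)) :=
      Finset.sum_nonneg (fun m hm => by linarith [hbm m hm])
    have hz1 : (n:ℝ) * (‖w' j‖ - F (w' j)) = 0 := by linarith
    have hz2 : ∑ m ∈ Finset.Ioc j n, (1 - σ j m * F (y m)) = 0 := by linarith
    constructor
    · have hnpos : (0:ℝ) < (n:ℝ) := by
        have : 0 < n := by omega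
        exact_mod_cast this
      have := mul_eq_zero.1 hz1
      rcases this with h | h
      · exfalso; linarith
      · linarith
    · intro m hm
      have heach := (Finset.sum_eq_zero_iff_of_nonneg
        (fun m hm => by linarith [hbm m hm])).1 hz2 m hm
      have hσF : σ j m * F (y m) = 1 := by linarith
      have hσ2 : σ j m * σ j m = 1 := by
        simp only [hσ]
        split <;> norm_num
      calc F (y m) = (σ j m * σ j m) * F (y m) := by rw [hσ2, one_mul]
        _ = σ j m * (σ j m * F (y m)) := by ring
        _ = σ j m := by rw [hσF, mul_one]
  -- cluster functionals
  have hcluster : ∀ j, ∃ g : X →L[ℝ] ℝ, ‖g‖ ≤ 1 ∧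
      ∀ (x : X) (L : ℝ), (∀ᶠ n in Filter.atTop, f j n x = L) → g x = L :=
    fun j => exists_cluster_functional (f j) (hfb j)
  set g : ℕ → (X →L[ℝ] ℝ) := fun j => (hcluster j).choose with hg
  have hg1 : ∀ j, ‖g j‖ ≤ 1 := fun j => (hcluster j).choose_spec.1
  have hgev : ∀ j (x : X) (L : ℝ), (∀ᶠ n in Filter.atTop, f j n x = L) → g j x = L :=
    fun j => (hcluster j).choose_spec.2
  have hgu : ∀ j, g j (u j) = ‖u j‖ := by
    intro j
    refine hgev j (u j) ‖u j‖ ?_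
    rw [Filter.eventually_atTop]
    refine ⟨j+1, fun n hn => ?_⟩
    have hjn : j < n := by omega
    have h1 : f j n (u j) = ‖u j‖ * f j n (w' j) := by
      rw [← hw'smul j, map_smul, smul_eq_mul]
      rw [hw'smul j]
    rw [h1, (hdef j n hjn).1, hw'mul]
  have hgy : ∀ j m, j < m → g j (y m) = σ j m := by
    intro j m hjm
    refine hgev j (y m) (σ j m) ?_
    rw [Filter.eventually_atTop]
    refine ⟨m, fun n hn => ?_⟩
    have hjn : j < n := by omega
    exact (hdef j n hjn).2 m (Finset.mem_Ioc.2 ⟨hjm, hn⟩)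
  exact ⟨u, y, W, g, hu, hyn, hpeel, huW, hg1, hgu, fun j m h => hgy j m h⟩

end Setup

section Abstract

variable {X : Type*} [NormedAddCommGroup X] [NormedSpace ℝ X]

set_option maxHeartbeats 2000000 in
lemma almost_daugavet_abstract (u y : ℕ → X) (W : ℕ → Submodule ℝ X)
    (g : ℕ → X →L[ℝ] ℝ)
    (hu : ∀ (x : X) (ε : ℝ), 0 < ε → ∃ n, ‖x - u n‖ < ε)
    (hyn : ∀ m, ‖y m‖ = 1)
    (hpeel : ∀ m, ∀ v ∈ W m, ∀ l : ℝ, ‖v + l • y m‖ = ‖v‖ + |l|)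
    (huW : ∀ i m, i ≤ m → u i ∈ W m)
    (hg1 : ∀ j, ‖g j‖ ≤ 1)
    (hgu : ∀ j, g j (u j) = ‖u j‖)
    (hgy : ∀ j m, j < m →
      g j (y m) = (if Nat.testBit (Nat.unpair m).1 j then (1:ℝ) else -1)) :
    ∃ Y : Submodule ℝ (X →L[ℝ] ℝ),
      (∀ x : X, ‖x‖ = sSup {r : ℝ | ∃ gg ∈ Y, ‖gg‖ ≤ 1 ∧ r = gg x}) ∧
      ∀ x : X, ∀ gg ∈ Y,
        ‖ContinuousLinearMap.id ℝ X + gg.smulRight x‖ = 1 + ‖gg.smulRight x‖ := by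
  classical
  refine ⟨Submodule.span ℝ (Set.range g), ?_, ?_⟩
  · -- norming
    intro x
    set S := {r : ℝ | ∃ gg ∈ Submodule.span ℝ (Set.range g), ‖gg‖ ≤ 1 ∧ r = gg x} with hS
    have hne : (0:ℝ) ∈ S := ⟨0, Submodule.zero_mem _, by simp, by simp⟩
    have hub : ∀ r ∈ S, r ≤ ‖x‖ := by
      rintro r ⟨gg, _, hgle, rfl⟩
      calc gg x ≤ |gg x| := le_abs_self _
        _ = ‖gg x‖ := (Real.norm_eq_abs _).symm
        _ ≤ ‖gg‖ * ‖x‖ := gg.le_opNorm x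
        _ ≤ 1 * ‖x‖ := mul_le_mul_of_nonneg_right hgle (norm_nonneg _)
        _ = ‖x‖ := one_mul _
    have hbdd : BddAbove S := ⟨‖x‖, fun r hr => hub r hr⟩
    refine le_antisymm ?_ (csSup_le ⟨0, hne⟩ hub)
    refine le_of_forall_pos_le_add ?_
    intro η hη
    obtain ⟨j, hj⟩ := hu x (η/2) (by linarith)
    have hmem : g j x ∈ S := ⟨g j, Submodule.subset_span ⟨j, rfl⟩, hg1 j, rfl⟩
    have h1 : ‖x‖ - η/2 ≤ ‖u j‖ := by
      have h := abs_norm_sub_norm_le x (u j)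
      have := (abs_le.1 h).2
      linarith
    have h2 : ‖x‖ - η ≤ g j x := by
      have h3 : g j x = g j (u j) + g j (x - u j) := by
        rw [← map_add]
        congr 1
        abel
      have h4 : |g j (x - u j)| ≤ ‖x - u j‖ := by
        rw [← Real.norm_eq_abs]
        calc ‖g j (x - u j)‖ ≤ ‖g j‖ * ‖x - u j‖ := (g j).le_opNorm _
          _ ≤ 1 * ‖x - u j‖ := mul_le_mul_of_nonneg_right (hg1 j) (norm_nonneg _)
          _ = ‖x - u j‖ := one_mul _
      have h5 : -(η/2) ≤ g j (x - u j) := by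
        have := (abs_le.1 h4).1
        linarith
      rw [h3, hgu j]
      linarith
    have := le_csSup hbdd hmem
    linarith
  · -- Daugavet equation
    intro x gg hgg
    rw [Finsupp.mem_span_range_iff_exists_finsupp] at hgg
    obtain ⟨c, hc⟩ := hgg
    set s : ℝ := ∑ j ∈ c.support, |c j| with hs
    have hs0 : 0 ≤ s := Finset.sum_nonneg fun _ _ => abs_nonneg _
    have hgsum : gg = ∑ j ∈ c.support, c j • g j := by
      rw [← hc]
      rfl
    have hgle : ‖gg‖ ≤ s := by
      rw [hgsum, hs]
      calc ‖∑ j ∈ c.support, c j • g j‖ ≤ ∑ j ∈ c.support, ‖c j • g j‖ := norm_sum_le _ _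
        _ ≤ ∑ j ∈ c.support, |c j| := by
            refine Finset.sum_le_sum fun j _ => ?_
            calc ‖c j • g j‖ ≤ ‖c j‖ * ‖g j‖ := ContinuousLinearMap.opNorm_smul_le _ _
              _ ≤ ‖c j‖ * 1 := mul_le_mul_of_nonneg_left (hg1 j) (norm_nonneg _)
              _ = |c j| := by rw [mul_one, Real.norm_eq_abs]
    obtain ⟨aa, haa⟩ := finset_testBit (c.support.filter (fun j => 0 < c j))
    have hgood : ∀ N : ℕ, ∃ m, N < m ∧ gg (y m) = s := by
      intro N
      set m := Nat.pair aa (N + 1 + (c.support.sup id)) with hm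
      have hm1 : N < m := lt_of_lt_of_le (by omega) (Nat.right_le_pair _ _)
      have hmsup : ∀ j ∈ c.support, j < m := by
        intro j hj
        have h1 : j ≤ c.support.sup id := Finset.le_sup (f := id) hj
        have h2 := Nat.right_le_pair aa (N + 1 + c.support.sup id)
        omega
      refine ⟨m, hm1, ?_⟩
      rw [hgsum]
      rw [ContinuousLinearMap.sum_apply]
      have hterm : ∀ j ∈ c.support, (c j • g j) (y m) = |c j| := by
        intro j hj
        rw [ContinuousLinearMap.smul_apply, smul_eq_mul, hgy j m (hmsup j hj)]
        have hun : (Nat.unpair m).1 = aa := by rw [hm, Nat.unpair_pair]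
        rw [hun]
        by_cases hcj : 0 < c j
        · have : Nat.testBit aa j = true := (haa j).2 (Finset.mem_filter.2 ⟨hj, hcj⟩)
          rw [this]
          simp [abs_of_pos hcj]
        · have hne0 : c j ≠ 0 := Finsupp.mem_support_iff.1 hj
          have hneg : c j < 0 := by
            rcases lt_trichotomy (c j) 0 with h | h | h
            · exact h
            · exact absurd h hne0
            · exact absurd h hcj
          have hfalse : aa.testBit j = false := by
            cases h : aa.testBit j
            · rfl
            · exact absurd (Finset.mem_filter.1 ((haa j).1 h)).2 hcj
          rw [hfalse]
          simp [abs_of_neg hneg]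
      rw [Finset.sum_congr rfl hterm, hs]
    have hnorm_s : ‖gg‖ = s := by
      obtain ⟨m, _, hm2⟩ := hgood 0
      refine le_antisymm hgle ?_
      calc s = gg (y m) := hm2.symm
        _ ≤ |gg (y m)| := le_abs_self _
        _ = ‖gg (y m)‖ := (Real.norm_eq_abs _).symm
        _ ≤ ‖gg‖ * ‖y m‖ := gg.le_opNorm _
        _ = ‖gg‖ := by rw [hyn, mul_one]
    have hsr : ‖gg.smulRight x‖ = s * ‖x‖ := by
      rw [ContinuousLinearMap.norm_smulRight_apply, hnorm_s]
    refine le_antisymm ?_ ?_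
    · calc ‖ContinuousLinearMap.id ℝ X + gg.smulRight x‖
          ≤ ‖ContinuousLinearMap.id ℝ X‖ + ‖gg.smulRight x‖ := norm_add_le _ _
        _ ≤ 1 + ‖gg.smulRight x‖ := by
            have := ContinuousLinearMap.norm_id_le (𝕜 := ℝ) (E := X)
            linarith
    · rw [hsr]
      refine le_of_forall_pos_le_add ?_
      intro η hη
      set η' := η / (2*(s+1)) with hη'
      have hs1 : (0:ℝ) < s + 1 := by linarith
      have hη'0 : 0 < η' := by
        rw [hη']
        positivity
      obtain ⟨i, hi⟩ := hu x η' hη'0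
      obtain ⟨m, hm1, hm2⟩ := hgood (i + 1)
      have him : i ≤ m := by omega
      set T := ContinuousLinearMap.id ℝ X + gg.smulRight x with hT
      have hTy : T (y m) = y m + s • x := by
        rw [hT, ContinuousLinearMap.add_apply, ContinuousLinearMap.id_apply,
          ContinuousLinearMap.smulRight_apply, hm2]
      have hkey : ‖s • u i + y m‖ = s * ‖u i‖ + 1 := by
        have h := hpeel m (s • u i) (Submodule.smul_mem _ _ (huW i m him)) 1
        rw [one_smul] at h
        rw [h, norm_smul, Real.norm_eq_abs, abs_of_nonneg hs0]
        norm_num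
      have h5 : s * ‖u i‖ + 1 - s * η' ≤ ‖y m + s • x‖ := by
        have htri : ‖s • u i + y m‖ ≤ ‖y m + s • x‖ + ‖s • (u i - x)‖ := by
          have heq : s • u i + y m = (y m + s • x) + s • (u i - x) := by
            rw [smul_sub]
            abel
          rw [heq]
          exact norm_add_le _ _
        have hsm : ‖s • (u i - x)‖ ≤ s * η' := by
          rw [norm_smul, Real.norm_eq_abs, abs_of_nonneg hs0, norm_sub_rev]
          exact mul_le_mul_of_nonneg_left (le_of_lt hi) hs0
        rw [hkey] at htri
        linarith
      have h6 : ‖x‖ - η' ≤ ‖u i‖ := by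
        have h := abs_norm_sub_norm_le x (u i)
        have := (abs_le.1 h).2
        linarith
      have h7 : ‖T (y m)‖ ≤ ‖T‖ := by
        calc ‖T (y m)‖ ≤ ‖T‖ * ‖y m‖ := T.le_opNorm _
          _ = ‖T‖ := by rw [hyn, mul_one]
      have h8 : 2 * (s * η') ≤ η := by
        have heq : η' * (2*(s+1)) = η := by
          rw [hη']
          field_simp
        have hexpand : η' * (2*(s+1)) = 2*(s*η') + 2*η' := by ring
        linarith
      rw [hTy] at h7
      nlinarith
  
end Abstract

/-- The hyperplane `M` of `JH_∞` (completion of the finitely supported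
functions vanishing at the root) is separable, its norm is octahedral, and it has the
almost Daugavet property: there is a norming subspace `Y ⊆ M*` such that
`‖I + g.smulRight x‖ = 1 + ‖g.smulRight x‖` for every rank-one operator `x ⊗ g` with
`x ∈ M`, `g ∈ Y`. -/
theorem stmt15 (X : Type*) [NormedAddCommGroup X] [NormedSpace ℝ X] [CompleteSpace X]
    (e : List ℕ → X)
    (hnorm : ∀ x : (List ℕ) →₀ ℝ, x [] = 0 → ‖∑ t ∈ x.support, x t • e t‖ = jhInfNorm x)
    (hdense : Dense (Submodule.span ℝ (e '' {t : List ℕ | t ≠ []}) : Set X)) :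
    TopologicalSpace.SeparableSpace X ∧
    (∀ ε : ℝ, 0 < ε → ∀ Y : Submodule ℝ X, FiniteDimensional ℝ Y →
      ∃ x : X, ‖x‖ = 1 ∧ ∀ y ∈ Y, ∀ l : ℝ, (1 - ε) * (|l| + ‖y‖) ≤ ‖l • x + y‖) ∧
    (∃ Y : Submodule ℝ (X →L[ℝ] ℝ),
      (∀ x : X, ‖x‖ = sSup {r : ℝ | ∃ g ∈ Y, ‖g‖ ≤ 1 ∧ r = g x}) ∧
      ∀ x : X, ∀ g ∈ Y,
        ‖ContinuousLinearMap.id ℝ X + g.smulRight x‖ = 1 + ‖g.smulRight x‖) := by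
  refine ⟨separable_of_dense_span e hnorm hdense,
    fun ε hε Y hY => octahedral e hnorm hdense ε hε Y hY, ?_⟩
  obtain ⟨u, y, W, g, hu, hyn, hpeel, huW, hg1, hgu, hgy⟩ := daugavet_setup e hnorm hdense
  exact almost_daugavet_abstract u y W g hu hyn hpeel huW hg1 hgu hgy
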